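/- If G is a connected graph maximizing the A_α-spectral radius among all connected graphs of order n and size m (with m ≥ n-1 fixed and 0 ≤ α < 1), then G is a threshold graph. -/

import Mathlib

open SimpleGraph

/-- The graph `2K₂` on four vertices: two disjoint edges. -/
def twoK2 : SimpleGraph (Fin 4) :=
  SimpleGraph.fromRel (fun a b => (a = 0 ∧ b = 1) ∨ (a = 2 ∧ b = 3))

/-- A graph is a threshold graph if it has no induced subgraph isomorphic to
`2K₂`, `C₄` or `P₄`.  (Graph embeddings are induced-subgraph embeddings.) -/
def IsThreshold {V : Type} (G : SimpleGraph V) : Prop :=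
  IsEmpty (twoK2 ↪g G) ∧ IsEmpty (SimpleGraph.cycleGraph 4 ↪g G) ∧
    IsEmpty (SimpleGraph.pathGraph 4 ↪g G)

open Matrix

noncomputable def Aalpha {n : ℕ} (G : SimpleGraph (Fin n)) (α : ℝ) :
    Matrix (Fin n) (Fin n) ℝ :=
  letI := Classical.decRel G.Adj
  α • Matrix.diagonal (fun v => (G.degree v : ℝ)) + (1 - α) • G.adjMatrix ℝ

def IsMaxEigenvalue {n : ℕ} (M : Matrix (Fin n) (Fin n) ℝ) (q : ℝ) : Prop :=
  (∃ x : Fin n → ℝ, x ≠ 0 ∧ M.mulVec x = q • x) ∧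
  ∀ (μ : ℝ) (x : Fin n → ℝ), x ≠ 0 → M.mulVec x = μ • x → μ ≤ q

set_option linter.unusedSectionVars false


open Matrix

variable {n : ℕ}

lemma dot_eq_inner (x y : Fin n → ℝ) :
    dotProduct x y = @inner ℝ (EuclideanSpace ℝ (Fin n)) _ (WithLp.toLp 2 x) (WithLp.toLp 2 y) := by
  simp [dotProduct, PiLp.inner_apply, RCLike.inner_apply, mul_comm]

lemma transpose_eq_self {M : Matrix (Fin n) (Fin n) ℝ} (hM : M.IsHermitian) : Mᵀ = M := by
  have := hM; rwa [Matrix.IsHermitian, conjTranspose_eq_transpose_of_trivial] at this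

lemma eig_mem {M : Matrix (Fin n) (Fin n) ℝ} (hM : M.IsHermitian) {x : Fin n → ℝ}
    {μ : ℝ} (hx : x ≠ 0) (hEq : M.mulVec x = μ • x) : ∃ i, μ = hM.eigenvalues i := by
  by_contra h
  push_neg at h
  apply hx
  have key : ∀ i, dotProduct (hM.eigenvectorBasis i) x = 0 := by
    intro i
    have h1 : dotProduct ((hM.eigenvectorBasis i : Fin n → ℝ)) (M.mulVec x)
        = μ * dotProduct (hM.eigenvectorBasis i) x := by
      rw [hEq, dotProduct_smul]; rfl
    have hv := hM.mulVec_eigenvectorBasis i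
    have h2 : dotProduct ((hM.eigenvectorBasis i : Fin n → ℝ)) (M.mulVec x)
        = hM.eigenvalues i * dotProduct (hM.eigenvectorBasis i) x := by
      rw [dotProduct_mulVec, ← mulVec_transpose, transpose_eq_self hM]
      erw [hv]
      rw [smul_dotProduct]
      rfl
    have h3 := h1.symm.trans h2
    rcases mul_eq_mul_right_iff.mp h3 with h' | h'
    · exact absurd h' (h i)
    · exact h'
  have hrepr : (hM.eigenvectorBasis.repr (WithLp.toLp 2 x)) = 0 := by
    ext i
    have := key i
    rw [dot_eq_inner] at this
    simpa [hM.eigenvectorBasis.repr_apply_apply] using this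
  exact (WithLp.toLp_eq_zero 2).mp (hM.eigenvectorBasis.repr.map_eq_zero_iff.mp hrepr)


lemma exists_isMaxEigenvalue (hn : 0 < n) {M : Matrix (Fin n) (Fin n) ℝ}
    (hM : M.IsHermitian) : ∃ q, IsMaxEigenvalue M q := by
  obtain ⟨i0, -, hi0⟩ := Finset.exists_max_image Finset.univ hM.eigenvalues
    ⟨⟨0, hn⟩, Finset.mem_univ _⟩
  refine ⟨hM.eigenvalues i0, ⟨⟨hM.eigenvectorBasis i0,
    (WithLp.ofLp_eq_zero 2).ne.2 (hM.eigenvectorBasis.orthonormal.ne_zero i0), hM.mulVec_eigenvectorBasis i0⟩, ?_⟩⟩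
  intro μ x hx hEq
  obtain ⟨i, rfl⟩ := eig_mem hM hx hEq
  exact hi0 i (Finset.mem_univ _)

lemma shifted_posSemidef {M : Matrix (Fin n) (Fin n) ℝ} {q : ℝ} (hM : M.IsHermitian)
    (hq : IsMaxEigenvalue M q) :
    (q • (1 : Matrix (Fin n) (Fin n) ℝ) - M).PosSemidef := by
  have hN : (q • (1 : Matrix (Fin n) (Fin n) ℝ) - M).IsHermitian := by
    unfold Matrix.IsHermitian
    rw [conjTranspose_sub, conjTranspose_smul, conjTranspose_one, hM, star_trivial]
  apply hN.posSemidef_iff_eigenvalues_nonneg.mpr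
  intro i
  have hv := hN.mulVec_eigenvectorBasis i
  set v : Fin n → ℝ := WithLp.ofLp (hN.eigenvectorBasis i) with hvdef
  have hvne : v ≠ 0 := (WithLp.ofLp_eq_zero 2).ne.2 (hN.eigenvectorBasis.orthonormal.ne_zero i)
  have hexp : (q • (1 : Matrix (Fin n) (Fin n) ℝ) - M) *ᵥ v = q • v - M *ᵥ v := by
    rw [sub_mulVec, smul_mulVec, one_mulVec]
  have hMv : M *ᵥ v = (q - hN.eigenvalues i) • v := by
    have : q • v - M *ᵥ v = hN.eigenvalues i • v := by rw [← hexp]; exact hv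
    have h2 : M *ᵥ v = q • v - hN.eigenvalues i • v := by
      rw [eq_comm] at this
      rw [eq_sub_iff_add_eq] at this ⊢
      linear_combination this
    rw [h2, sub_smul]
  have := hq.2 _ v hvne hMv
  exact (by linarith : (0:ℝ) ≤ hN.eigenvalues i)

lemma rayleigh_le {M : Matrix (Fin n) (Fin n) ℝ} {q : ℝ} (hM : M.IsHermitian)
    (hq : IsMaxEigenvalue M q) (x : Fin n → ℝ) :
    dotProduct x (M *ᵥ x) ≤ q * dotProduct x x := by
  have h := (shifted_posSemidef hM hq).dotProduct_mulVec_nonneg x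
  rw [star_trivial, sub_mulVec, smul_mulVec, one_mulVec, dotProduct_sub,
    dotProduct_smul] at h
  simpa using sub_nonneg.mp h

lemma rayleigh_eq_eigen {M : Matrix (Fin n) (Fin n) ℝ} {q : ℝ} (hM : M.IsHermitian)
    (hq : IsMaxEigenvalue M q) {x : Fin n → ℝ}
    (h : dotProduct x (M *ᵥ x) = q * dotProduct x x) : M *ᵥ x = q • x := by
  have h0 : star x ⬝ᵥ (q • (1 : Matrix (Fin n) (Fin n) ℝ) - M) *ᵥ x = 0 := by
    rw [star_trivial, sub_mulVec, smul_mulVec, one_mulVec, dotProduct_sub,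
      dotProduct_smul, h]
    simp
  have := (shifted_posSemidef hM hq).dotProduct_mulVec_zero_iff x |>.mp h0
  rw [sub_mulVec, smul_mulVec, one_mulVec, sub_eq_zero] at this
  exact this.symm

variable {n : ℕ}

open scoped Classical in
/-- real indicator of adjacency -/
noncomputable def ad (G : SimpleGraph (Fin n)) (i j : Fin n) : ℝ :=
  if G.Adj i j then 1 else 0

noncomputable def qd (G : SimpleGraph (Fin n)) (i : Fin n) : ℝ := ∑ j, ad G i j

lemma ad_nonneg (G : SimpleGraph (Fin n)) (i j : Fin n) : 0 ≤ ad G i j := by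
  unfold ad; split <;> norm_num

lemma ad_eq_one {G : SimpleGraph (Fin n)} {i j : Fin n} (h : G.Adj i j) :
    ad G i j = 1 := by unfold ad; simp [h]

lemma ad_eq_zero {G : SimpleGraph (Fin n)} {i j : Fin n} (h : ¬ G.Adj i j) :
    ad G i j = 0 := by unfold ad; simp [h]

lemma ad_comm (G : SimpleGraph (Fin n)) (i j : Fin n) : ad G i j = ad G j i := by
  unfold ad
  rw [SimpleGraph.adj_comm]

lemma qd_nonneg (G : SimpleGraph (Fin n)) (i : Fin n) : 0 ≤ qd G i :=
  Finset.sum_nonneg fun j _ => ad_nonneg G i j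

lemma qd_eq_degree (G : SimpleGraph (Fin n)) (i : Fin n) :
    letI := Classical.decRel G.Adj
    (G.degree i : ℝ) = qd G i := by
  classical
  letI := Classical.decRel G.Adj
  have h1 : G.degree i = (Finset.univ.filter (G.Adj i)).card := by
    rw [← SimpleGraph.neighborFinset_eq_filter]
    rfl
  rw [h1, Finset.card_filter]
  unfold qd ad
  push_cast
  apply Finset.sum_congr rfl
  intro j _
  split <;> simp

lemma Aalpha_apply (G : SimpleGraph (Fin n)) (α : ℝ) (i j : Fin n) :
    Aalpha G α i j = (if i = j then α * qd G i else 0) + (1 - α) * ad G i j := by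
  classical
  unfold Aalpha
  rw [Matrix.add_apply, Matrix.smul_apply, Matrix.smul_apply, Matrix.diagonal_apply,
    SimpleGraph.adjMatrix_apply, smul_eq_mul, smul_eq_mul]
  congr 1
  · rw [mul_ite, mul_zero]
    by_cases h : i = j
    · subst h; rw [if_pos rfl, if_pos rfl, ← qd_eq_degree]
    · rw [if_neg h, if_neg h]

lemma Aalpha_isHermitian (G : SimpleGraph (Fin n)) (α : ℝ) : (Aalpha G α).IsHermitian := by
  unfold Matrix.IsHermitian
  rw [conjTranspose_eq_transpose_of_trivial]
  ext i j
  rw [Matrix.transpose_apply, Aalpha_apply, Aalpha_apply, ad_comm]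
  by_cases h : i = j
  · subst h; rfl
  · rw [if_neg h, if_neg (Ne.symm h)]

lemma Aalpha_mulVec (G : SimpleGraph (Fin n)) (α : ℝ) (y : Fin n → ℝ) (i : Fin n) :
    (Aalpha G α *ᵥ y) i = α * qd G i * y i + (1 - α) * ∑ j, ad G i j * y j := by
  unfold Matrix.mulVec dotProduct
  simp only [Aalpha_apply, add_mul, ite_mul, zero_mul]
  rw [Finset.sum_add_distrib, Finset.sum_ite_eq Finset.univ i (fun j => α * qd G i * y j),
    if_pos (Finset.mem_univ i), Finset.mul_sum]
  congr 1
  apply Finset.sum_congr rfl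
  intro j _
  ring

lemma Aalpha_entry_nonneg {α : ℝ} (hα0 : 0 ≤ α) (hα1 : α < 1) (G : SimpleGraph (Fin n))
    (i j : Fin n) : 0 ≤ Aalpha G α i j := by
  rw [Aalpha_apply]
  have h1 : (0:ℝ) ≤ 1 - α := by linarith
  have := qd_nonneg G i
  have := ad_nonneg G i j
  positivity

lemma perron {α ρ : ℝ} (hα0 : 0 ≤ α) (hα1 : α < 1) {G : SimpleGraph (Fin n)}
    (hconn : G.Connected) (hρ : IsMaxEigenvalue (Aalpha G α) ρ) :
    ∃ x : Fin n → ℝ, (∀ i, 0 < x i) ∧ Aalpha G α *ᵥ x = ρ • x := by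
  obtain ⟨⟨x0, hx0ne, hx0⟩, hub⟩ := hρ
  set M := Aalpha G α with hM
  set y : Fin n → ℝ := fun i => |x0 i| with hy
  have hy0 : ∀ i, 0 ≤ y i := fun i => abs_nonneg _
  have hyy : dotProduct y y = dotProduct x0 x0 := by
    unfold dotProduct
    apply Finset.sum_congr rfl
    intro i _
    exact abs_mul_abs_self _
  have hq1 : dotProduct x0 (M *ᵥ x0) = ρ * dotProduct x0 x0 := by
    rw [hx0, dotProduct_smul]; rfl
  have hmono : dotProduct x0 (M *ᵥ x0) ≤ dotProduct y (M *ᵥ y) := by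
    unfold dotProduct Matrix.mulVec dotProduct
    apply Finset.sum_le_sum
    intro i _
    rw [Finset.mul_sum, Finset.mul_sum]
    apply Finset.sum_le_sum
    intro j _
    have hMnn : 0 ≤ M i j := Aalpha_entry_nonneg hα0 hα1 G i j
    calc x0 i * (M i j * x0 j) ≤ |x0 i * (M i j * x0 j)| := le_abs_self _
      _ = y i * (M i j * y j) := by
          rw [abs_mul, abs_mul, abs_of_nonneg hMnn]
  have hray : dotProduct y (M *ᵥ y) ≤ ρ * dotProduct y y :=
    rayleigh_le (Aalpha_isHermitian G α) ⟨⟨x0, hx0ne, hx0⟩, hub⟩ y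
  have heq : dotProduct y (M *ᵥ y) = ρ * dotProduct y y := by
    refine le_antisymm hray ?_
    rw [hyy, ← hq1]
    exact hmono
  have heig : M *ᵥ y = ρ • y :=
    rayleigh_eq_eigen (Aalpha_isHermitian G α) ⟨⟨x0, hx0ne, hx0⟩, hub⟩ heq
  have hyne : y ≠ 0 := by
    intro h
    apply hx0ne
    funext i
    have := congrFun h i
    simpa [hy] using abs_eq_zero.mp this
  have zero_prop : ∀ i, y i = 0 → ∀ j, G.Adj i j → y j = 0 := by
    intro i hi j hj
    have h1 := congrFun heig i
    rw [Aalpha_mulVec, Pi.smul_apply, smul_eq_mul, hi, mul_zero, mul_zero, zero_add] at h1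
    have h2 : ∑ k, ad G i k * y k = 0 := by
      have h1a : (1 - α) ≠ 0 := by linarith
      rcases mul_eq_zero.mp h1 with h | h
      · exact absurd h h1a
      · exact h
    have h3 := (Finset.sum_eq_zero_iff_of_nonneg (fun k _ =>
      mul_nonneg (ad_nonneg G i k) (hy0 k))).mp h2 j (Finset.mem_univ j)
    rw [ad_eq_one hj, one_mul] at h3
    exact h3
  have prop : ∀ (a c : Fin n), G.Walk a c → y a = 0 → y c = 0 := by
    intro a c w
    induction w with
    | nil => exact fun h => h
    | cons h p ih => intro ha; exact ih (zero_prop _ ha _ h)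
  refine ⟨y, fun i => ?_, heig⟩
  rcases (hy0 i).lt_or_eq with h | h
  · exact h
  · exfalso
    apply hyne
    funext j
    exact ((hconn.preconnected i j).elim fun w => prop _ _ w h.symm)

def rot {n : ℕ} (G : SimpleGraph (Fin n)) (u v b : Fin n) : SimpleGraph (Fin n) where
  Adj i j := (G.Adj i j ∧ ¬ s(i,j) = s(v,b)) ∨ (i ≠ j ∧ s(i,j) = s(u,b))
  symm := by
    constructor
    intro i j h
    rw [Sym2.eq_swap]
    rcases h with ⟨h1, h2⟩ | ⟨h1, h2⟩
    · exact Or.inl ⟨h1.symm, h2⟩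
    · exact Or.inr ⟨h1.symm, h2⟩
  loopless := by
    constructor
    intro i h
    rcases h with ⟨h1, _⟩ | ⟨h1, _⟩
    · exact G.loopless.irrefl i h1
    · exact h1 rfl

section Rot

variable {G : SimpleGraph (Fin n)} {u v b : Fin n}
  (huv : u ≠ v) (hune : u ≠ b) (hvb : G.Adj v b) (hub : ¬ G.Adj u b)

lemma rot_adj (i j : Fin n) : (rot G u v b).Adj i j ↔
    ((G.Adj i j ∧ ¬ s(i,j) = s(v,b)) ∨ (i ≠ j ∧ s(i,j) = s(u,b))) := Iff.rfl

include huv hune hvb hub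

lemma rot_adj_u (j : Fin n) : (rot G u v b).Adj u j ↔ (G.Adj u j ∨ j = b) := by
  have hvne : v ≠ b := hvb.ne
  rw [rot_adj, Sym2.eq_iff, Sym2.eq_iff]
  constructor
  · rintro (⟨h1, -⟩ | ⟨-, (⟨-, h4⟩ | ⟨h3, -⟩)⟩)
    · exact Or.inl h1
    · exact Or.inr h4
    · exact absurd h3 hune
  · rintro (h | rfl)
    · refine Or.inl ⟨h, ?_⟩
      rintro (⟨h3, -⟩ | ⟨h3, -⟩)
      · exact huv h3
      · exact hune h3
    · exact Or.inr ⟨hune, Or.inl ⟨rfl, rfl⟩⟩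

lemma rot_adj_v (j : Fin n) : (rot G u v b).Adj v j ↔ (G.Adj v j ∧ j ≠ b) := by
  have hvne : v ≠ b := hvb.ne
  rw [rot_adj, Sym2.eq_iff, Sym2.eq_iff]
  constructor
  · rintro (⟨h1, h2⟩ | ⟨-, (⟨h3, -⟩ | ⟨h3, -⟩)⟩)
    · exact ⟨h1, fun hj => h2 (Or.inl ⟨rfl, hj⟩)⟩
    · exact absurd h3.symm huv
    · exact absurd h3 hvne
  · rintro ⟨h1, h2⟩
    refine Or.inl ⟨h1, ?_⟩
    rintro (⟨-, h4⟩ | ⟨h3, -⟩)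
    · exact h2 h4
    · exact hvne h3

lemma rot_adj_b (j : Fin n) : (rot G u v b).Adj b j ↔ ((G.Adj b j ∧ j ≠ v) ∨ j = u) := by
  have hvne : v ≠ b := hvb.ne
  rw [rot_adj, Sym2.eq_iff, Sym2.eq_iff]
  constructor
  · rintro (⟨h1, h2⟩ | ⟨-, (⟨h3, -⟩ | ⟨-, h4⟩)⟩)
    · exact Or.inl ⟨h1, fun hj => h2 (Or.inr ⟨rfl, hj⟩)⟩
    · exact absurd h3.symm hune
    · exact Or.inr h4
  · rintro (⟨h1, h2⟩ | rfl)
    · refine Or.inl ⟨h1, ?_⟩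
      rintro (⟨h3, -⟩ | ⟨-, h4⟩)
      · exact hvne h3.symm
      · exact h2 h4
    · exact Or.inr ⟨fun h => hune h.symm, Or.inr ⟨rfl, rfl⟩⟩

lemma rot_adj_other {i : Fin n} (hiu : i ≠ u) (hiv : i ≠ v) (hib : i ≠ b) (j : Fin n) :
    (rot G u v b).Adj i j ↔ G.Adj i j := by
  rw [rot_adj, Sym2.eq_iff, Sym2.eq_iff]
  constructor
  · rintro (⟨h1, -⟩ | ⟨-, (⟨h3, -⟩ | ⟨h3, -⟩)⟩)
    · exact h1
    · exact absurd h3 hiu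
    · exact absurd h3 hib
  · intro h
    refine Or.inl ⟨h, ?_⟩
    rintro (⟨h3, -⟩ | ⟨h3, -⟩)
    · exact hiv h3
    · exact hib h3

end Rot

section RotQd

variable {G : SimpleGraph (Fin n)} {u v b : Fin n}
  (huv : u ≠ v) (hune : u ≠ b) (hvb : G.Adj v b) (hub : ¬ G.Adj u b)

include huv hune hvb hub

lemma rot_ad_u (j : Fin n) :
    ad (rot G u v b) u j = ad G u j + (if j = b then 1 else 0) := by
  classical
  by_cases h : j = b
  · rw [if_pos h, h, ad_eq_zero hub, ad_eq_one ((rot_adj_u huv hune hvb hub b).mpr (Or.inr rfl))]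
    norm_num
  · rw [if_neg h, add_zero]
    by_cases h2 : G.Adj u j
    · rw [ad_eq_one h2, ad_eq_one ((rot_adj_u huv hune hvb hub j).mpr (Or.inl h2))]
    · rw [ad_eq_zero h2, ad_eq_zero]
      rw [rot_adj_u huv hune hvb hub j]
      rintro (h3 | h3) <;> [exact h2 h3; exact h h3]

lemma rot_ad_v (j : Fin n) :
    ad (rot G u v b) v j = ad G v j - (if j = b then 1 else 0) := by
  classical
  by_cases h : j = b
  · rw [if_pos h, h, ad_eq_one hvb, ad_eq_zero]
    · norm_num
    · rw [rot_adj_v huv hune hvb hub]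
      rintro ⟨-, h3⟩; exact h3 rfl
  · rw [if_neg h, sub_zero]
    by_cases h2 : G.Adj v j
    · rw [ad_eq_one h2, ad_eq_one ((rot_adj_v huv hune hvb hub j).mpr ⟨h2, h⟩)]
    · rw [ad_eq_zero h2, ad_eq_zero]
      rw [rot_adj_v huv hune hvb hub j]
      rintro ⟨h3, -⟩; exact h2 h3

lemma rot_ad_b (j : Fin n) :
    ad (rot G u v b) b j = ad G b j - (if j = v then 1 else 0) + (if j = u then 1 else 0) := by
  classical
  have hvne : v ≠ b := hvb.ne
  by_cases h : j = v
  · rw [if_pos h, h, if_neg (fun h => huv h.symm), ad_eq_one hvb.symm, ad_eq_zero]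
    · norm_num
    · rw [rot_adj_b huv hune hvb hub]
      rintro (⟨-, h3⟩ | h3)
      · exact h3 rfl
      · exact huv h3.symm
  · rw [if_neg h]
    by_cases h2 : j = u
    · rw [if_pos h2, h2, ad_eq_zero (fun h3 => hub h3.symm),
        ad_eq_one ((rot_adj_b huv hune hvb hub u).mpr (Or.inr rfl))]
      norm_num
    · rw [if_neg h2, sub_zero, add_zero]
      by_cases h3 : G.Adj b j
      · rw [ad_eq_one h3, ad_eq_one ((rot_adj_b huv hune hvb hub j).mpr (Or.inl ⟨h3, h⟩))]
      · rw [ad_eq_zero h3, ad_eq_zero]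
        rw [rot_adj_b huv hune hvb hub j]
        rintro (⟨h4, -⟩ | h4) <;> [exact h3 h4; exact h2 h4]

lemma rot_ad_other {i : Fin n} (hiu : i ≠ u) (hiv : i ≠ v) (hib : i ≠ b) (j : Fin n) :
    ad (rot G u v b) i j = ad G i j := by
  by_cases h : G.Adj i j
  · rw [ad_eq_one h, ad_eq_one ((rot_adj_other huv hune hvb hub hiu hiv hib j).mpr h)]
  · rw [ad_eq_zero h, ad_eq_zero (fun h2 => h ((rot_adj_other huv hune hvb hub hiu hiv hib j).mp h2))]

lemma rot_qd_u : qd (rot G u v b) u = qd G u + 1 := by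
  unfold qd
  rw [Finset.sum_congr rfl (fun j _ => rot_ad_u huv hune hvb hub j),
    Finset.sum_add_distrib, Finset.sum_ite_eq' Finset.univ b (fun _ => (1:ℝ)),
    if_pos (Finset.mem_univ b)]

lemma rot_qd_v : qd (rot G u v b) v = qd G v - 1 := by
  unfold qd
  rw [Finset.sum_congr rfl (fun j _ => rot_ad_v huv hune hvb hub j),
    Finset.sum_sub_distrib, Finset.sum_ite_eq' Finset.univ b (fun _ => (1:ℝ)),
    if_pos (Finset.mem_univ b)]

lemma rot_qd_b : qd (rot G u v b) b = qd G b := by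
  unfold qd
  rw [Finset.sum_congr rfl (fun j _ => rot_ad_b huv hune hvb hub j)]
  rw [Finset.sum_add_distrib, Finset.sum_sub_distrib,
    Finset.sum_ite_eq' Finset.univ v (fun _ => (1:ℝ)),
    Finset.sum_ite_eq' Finset.univ u (fun _ => (1:ℝ)),
    if_pos (Finset.mem_univ v), if_pos (Finset.mem_univ u)]
  ring

lemma rot_qd_other {i : Fin n} (hiu : i ≠ u) (hiv : i ≠ v) (hib : i ≠ b) :
    qd (rot G u v b) i = qd G i :=
  Finset.sum_congr rfl (fun j _ => rot_ad_other huv hune hvb hub hiu hiv hib j)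

end RotQd

section RotEdge

variable {G : SimpleGraph (Fin n)} {u v b : Fin n}
  (huv : u ≠ v) (hune : u ≠ b) (hvb : G.Adj v b) (hub : ¬ G.Adj u b)

include huv hune hvb hub

lemma rot_edgeSet :
    (rot G u v b).edgeSet = insert s(u,b) (G.edgeSet \ {s(v,b)}) := by
  ext e
  induction e with
  | _ i j =>
    rw [SimpleGraph.mem_edgeSet, rot_adj]
    simp only [Set.mem_insert_iff, Set.mem_diff, Set.mem_singleton_iff,
      SimpleGraph.mem_edgeSet]
    constructor
    · rintro (⟨h1, h2⟩ | ⟨h1, h2⟩)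
      · exact Or.inr ⟨h1, h2⟩
      · exact Or.inl h2
    · rintro (h | ⟨h1, h2⟩)
      · refine Or.inr ⟨?_, h⟩
        rcases Sym2.eq_iff.mp h with ⟨rfl, rfl⟩ | ⟨h3, h4⟩
        · exact hune
        · rw [h3, h4]; exact fun h5 => hune h5.symm
      · exact Or.inl ⟨h1, h2⟩

lemma rot_ncard (m : ℕ) (hm : G.edgeSet.ncard = m) :
    (rot G u v b).edgeSet.ncard = m := by
  rw [rot_edgeSet huv hune hvb hub]
  have h1 : s(u,b) ∉ G.edgeSet \ {s(v,b)} := by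
    rintro ⟨h2, -⟩
    exact hub h2
  rw [Set.ncard_insert_of_notMem h1 ((G.edgeSet.toFinite).diff)]
  rw [Set.ncard_diff_singleton_add_one ((SimpleGraph.mem_edgeSet G).mpr hvb) G.edgeSet.toFinite]
  exact hm

lemma rot_conn (hreach : (rot G u v b).Reachable v b) (hconn : G.Connected) :
    (rot G u v b).Connected := by
  rw [SimpleGraph.connected_iff] at hconn ⊢
  refine ⟨?_, hconn.2⟩
  intro i j
  have step : ∀ a c : Fin n, G.Adj a c → (rot G u v b).Reachable a c := by
    intro a c hac
    by_cases h : s(a,c) = s(v,b)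
    · rcases Sym2.eq_iff.mp h with ⟨rfl, rfl⟩ | ⟨rfl, rfl⟩
      · exact hreach
      · exact hreach.symm
    · exact SimpleGraph.Adj.reachable (Or.inl ⟨hac, h⟩)
  have key : ∀ a c : Fin n, G.Walk a c → (rot G u v b).Reachable a c := by
    intro a c w
    induction w with
    | nil => exact SimpleGraph.Reachable.refl _
    | cons h p ih => exact (step _ _ h).trans ih
  exact (hconn.1 i j).elim fun w => key i j w

end RotEdge

lemma delete_dichotomy {G : SimpleGraph (Fin n)} {w b : Fin n}
    (G0 : SimpleGraph (Fin n)) (hG0 : ∀ i j, G0.Adj i j ↔ (G.Adj i j ∧ ¬ s(i,j) = s(w,b)))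
    (a : Fin n) (h : G.Reachable a w) : G0.Reachable a w ∨ G0.Reachable a b := by
  have key : ∀ (x c : Fin n), G.Walk x c →
      G0.Reachable x c ∨ G0.Reachable x w ∨ G0.Reachable x b := by
    intro x c p
    induction p with
    | nil => exact Or.inl (SimpleGraph.Reachable.refl _)
    | @cons x y c h q ih =>
      by_cases h2 : s(x,y) = s(w,b)
      · rcases Sym2.eq_iff.mp h2 with ⟨rfl, rfl⟩ | ⟨rfl, rfl⟩
        · exact Or.inr (Or.inl (SimpleGraph.Reachable.refl _))
        · exact Or.inr (Or.inr (SimpleGraph.Reachable.refl _))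
      · have hxy : G0.Reachable x y := SimpleGraph.Adj.reachable ((hG0 x y).mpr ⟨h, h2⟩)
        rcases ih with h3 | h3 | h3
        · exact Or.inl (hxy.trans h3)
        · exact Or.inr (Or.inl (hxy.trans h3))
        · exact Or.inr (Or.inr (hxy.trans h3))
  obtain ⟨p⟩ := h
  rcases key a w p with h3 | h3 | h3
  · exact Or.inl h3
  · exact Or.inl h3
  · exact Or.inr h3

lemma rot_rows {α : ℝ} {G : SimpleGraph (Fin n)} (x : Fin n → ℝ)
    {u v b : Fin n} (huv : u ≠ v) (hune : u ≠ b) (hvb : G.Adj v b) (hub : ¬ G.Adj u b) :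
    ∀ i, (Aalpha (rot G u v b) α *ᵥ x) i - (Aalpha G α *ᵥ x) i =
      (if i = u then α * x u + (1-α) * x b else 0)
      + (if i = v then -(α * x v) - (1-α) * x b else 0)
      + (if i = b then (1-α) * (x u - x v) else 0) := by
  have hvbne : v ≠ b := hvb.ne
  intro i
  rw [Aalpha_mulVec, Aalpha_mulVec]
  by_cases hiu : i = u
  · subst hiu
    rw [if_pos rfl, if_neg huv, if_neg hune, rot_qd_u huv hune hvb hub,
      Finset.sum_congr rfl (fun j _ => by rw [rot_ad_u huv hune hvb hub j])]
    simp only [add_mul, ite_mul, one_mul, zero_mul]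
    rw [Finset.sum_add_distrib, Finset.sum_ite_eq' Finset.univ b (fun j => x j),
      if_pos (Finset.mem_univ b)]
    ring
  · by_cases hiv : i = v
    · subst hiv
      rw [if_pos rfl, if_neg hiu, if_neg hvbne, rot_qd_v huv hune hvb hub,
        Finset.sum_congr rfl (fun j _ => by rw [rot_ad_v huv hune hvb hub j])]
      simp only [sub_mul, ite_mul, one_mul, zero_mul]
      rw [Finset.sum_sub_distrib, Finset.sum_ite_eq' Finset.univ b (fun j => x j),
        if_pos (Finset.mem_univ b)]
      ring
    · by_cases hib : i = b
      · subst hib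
        rw [if_pos rfl, if_neg hiu, if_neg hiv, rot_qd_b huv hune hvb hub,
          Finset.sum_congr rfl (fun j _ => by rw [rot_ad_b huv hune hvb hub j])]
        simp only [add_mul, sub_mul, ite_mul, one_mul, zero_mul]
        rw [Finset.sum_add_distrib, Finset.sum_sub_distrib,
          Finset.sum_ite_eq' Finset.univ v (fun j => x j),
          Finset.sum_ite_eq' Finset.univ u (fun j => x j),
          if_pos (Finset.mem_univ v), if_pos (Finset.mem_univ u)]
        ring
      · rw [if_neg hiu, if_neg hiv, if_neg hib,
          rot_qd_other huv hune hvb hub hiu hiv hib,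
          Finset.sum_congr rfl (fun j _ =>
            by rw [rot_ad_other huv hune hvb hub hiu hiv hib j])]
        ring

lemma rot_spectral_gt {α : ℝ} (hα0 : 0 ≤ α) (hα1 : α < 1) {G : SimpleGraph (Fin n)}
    {ρ : ℝ} {x : Fin n → ℝ} (hx : ∀ i, 0 < x i) (hxe : Aalpha G α *ᵥ x = ρ • x)
    {u v b : Fin n} (huv : u ≠ v) (hune : u ≠ b) (hvb : G.Adj v b) (hub : ¬ G.Adj u b)
    (hxuv : x v ≤ x u) {ρ' : ℝ} (hρ' : IsMaxEigenvalue (Aalpha (rot G u v b) α) ρ') :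
    ρ < ρ' := by
  set H := rot G u v b with hH
  have hrow := rot_rows (α := α) x huv hune hvb hub
  have hΔ : dotProduct x (Aalpha H α *ᵥ x) - dotProduct x (Aalpha G α *ᵥ x)
      = α * (x u ^ 2 - x v ^ 2) + 2 * (1 - α) * (x b * (x u - x v)) := by
    unfold dotProduct
    rw [← Finset.sum_sub_distrib,
      Finset.sum_congr rfl (fun i _ => by rw [← mul_sub, hrow i])]
    simp only [mul_add, mul_ite, mul_zero]
    rw [Finset.sum_add_distrib, Finset.sum_add_distrib]
    simp only [Finset.sum_ite_eq', Finset.mem_univ, if_true]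
    ring
  have hΔ0 : 0 ≤ α * (x u ^ 2 - x v ^ 2) + 2 * (1 - α) * (x b * (x u - x v)) := by
    have h1 := hx u
    have h2 := hx v
    have h3 := hx b
    have k1 : 0 ≤ x u - x v := by linarith
    have k2 : 0 ≤ x u + x v := by linarith
    nlinarith [mul_nonneg hα0 (mul_nonneg k1 k2),
      mul_nonneg (by linarith : (0:ℝ) ≤ 2 * (1 - α)) (mul_nonneg h3.le k1)]
  have hd : dotProduct x (Aalpha G α *ᵥ x) = ρ * dotProduct x x := by
    rw [hxe, dotProduct_smul]; rfl
  have hray := rayleigh_le (Aalpha_isHermitian H α) hρ' x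
  have hxx : 0 < dotProduct x x := by
    apply Finset.sum_pos' (fun i _ => mul_self_nonneg (x i))
    exact ⟨u, Finset.mem_univ u, mul_pos (hx u) (hx u)⟩
  have h1 : ρ ≤ ρ' := by nlinarith
  rcases h1.lt_or_eq with h2 | h2
  · exact h2
  · exfalso
    have heq : dotProduct x (Aalpha H α *ᵥ x) = ρ' * dotProduct x x := by
      have hle : α * (x u ^ 2 - x v ^ 2) + 2 * (1 - α) * (x b * (x u - x v)) ≤ 0 := by
        nlinarith
      have hz : α * (x u ^ 2 - x v ^ 2) + 2 * (1 - α) * (x b * (x u - x v)) = 0 :=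
        le_antisymm hle hΔ0
      rw [← h2]
      linarith [hΔ, hd, hz]
    have heig := rayleigh_eq_eigen (Aalpha_isHermitian H α) hρ' heq
    have hv := hrow v
    rw [heig, hxe, Pi.smul_apply, Pi.smul_apply, smul_eq_mul, smul_eq_mul, ← h2,
      sub_self, if_neg (Ne.symm huv), if_pos rfl, if_neg hvb.ne] at hv
    have h3 := hx v
    have h4 := hx b
    rw [eq_comm] at hv
    have : -(α * x v) - (1-α) * x b < 0 := by nlinarith
    simp only [zero_add, add_zero] at hv
    linarith [hv ▸ this]

lemma rot_false {m : ℕ} {α : ℝ} (hα0 : 0 ≤ α) (hα1 : α < 1) {G : SimpleGraph (Fin n)}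
    (hconn : G.Connected) (hcard : G.edgeSet.ncard = m) {ρ : ℝ}
    (hmax : ∀ H : SimpleGraph (Fin n), H.Connected → H.edgeSet.ncard = m →
      ∀ ρ' : ℝ, IsMaxEigenvalue (Aalpha H α) ρ' → ρ' ≤ ρ)
    {x : Fin n → ℝ} (hx : ∀ i, 0 < x i) (hxe : Aalpha G α *ᵥ x = ρ • x)
    {u v b : Fin n} (huv : u ≠ v) (hune : u ≠ b) (hvb : G.Adj v b) (hub : ¬ G.Adj u b)
    (hxuv : x v ≤ x u) (hreach : (rot G u v b).Reachable v b) : False := by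
  obtain ⟨ρ', hρ'⟩ := exists_isMaxEigenvalue u.pos (Aalpha_isHermitian (rot G u v b) α)
  have hgt := rot_spectral_gt hα0 hα1 hx hxe huv hune hvb hub hxuv hρ'
  have hle := hmax (rot G u v b) (rot_conn huv hune hvb hub hreach hconn)
    (rot_ncard huv hune hvb hub m hcard) ρ' hρ'
  linarith

lemma sym2_ne_of_ne {a c d e : Fin n} (h1 : c ≠ e) (h2 : a ≠ d) (h3 : a ≠ e) :
    s(a, c) ≠ s(d, e) := by
  intro h
  rcases Sym2.eq_iff.mp h with ⟨h4, h5⟩ | ⟨h4, h5⟩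
  · exact h2 h4
  · exact h3 h4

lemma twoK2_case {m : ℕ} {α : ℝ} (hα0 : 0 ≤ α) (hα1 : α < 1) {G : SimpleGraph (Fin n)}
    (hconn : G.Connected) (hcard : G.edgeSet.ncard = m) {ρ : ℝ}
    (hmax : ∀ H : SimpleGraph (Fin n), H.Connected → H.edgeSet.ncard = m →
      ∀ ρ' : ℝ, IsMaxEigenvalue (Aalpha H α) ρ' → ρ' ≤ ρ)
    {x : Fin n → ℝ} (hx : ∀ i, 0 < x i) (hxe : Aalpha G α *ᵥ x = ρ • x)
    {u w b : Fin n} (huw : u ≠ w) (hune : u ≠ b) (hwb : G.Adj w b)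
    (hubA : ¬ G.Adj u b) (hubW : ¬ G.Adj u w) (hxw : x w ≤ x u) (hxb : x b ≤ x u) :
    False := by
  have hG0 : ∀ i j, (G.deleteEdges {s(w,b)}).Adj i j ↔ (G.Adj i j ∧ ¬ s(i,j) = s(w,b)) := by
    intro i j
    rw [SimpleGraph.deleteEdges_adj]
    simp
  rcases delete_dichotomy (G.deleteEdges {s(w,b)}) hG0 u (hconn.preconnected u w) with h | h
  · apply rot_false hα0 hα1 hconn hcard hmax hx hxe huw hune hwb hubA hxw
    have hle : G.deleteEdges {s(w,b)} ≤ rot G u w b := by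
      intro i j hij
      exact Or.inl ((hG0 i j).mp hij)
    have h1 : (rot G u w b).Reachable w u := (h.mono hle).symm
    exact h1.trans (SimpleGraph.Adj.reachable
      ((rot_adj_u huw hune hwb hubA b).mpr (Or.inr rfl)))
  · apply rot_false hα0 hα1 hconn hcard hmax hx hxe hune huw hwb.symm hubW hxb
    have hle : G.deleteEdges {s(w,b)} ≤ rot G u b w := by
      intro i j hij
      refine Or.inl ⟨((hG0 i j).mp hij).1, fun h2 => ((hG0 i j).mp hij).2 ?_⟩
      rw [h2, Sym2.eq_swap]
    have h1 : (rot G u b w).Reachable b u := (h.mono hle).symm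
    exact h1.trans (SimpleGraph.Adj.reachable
      ((rot_adj_u hune huw hwb.symm hubW w).mpr (Or.inr rfl)))

lemma sym2_ne_left {a c e : Fin n} (h1 : c ≠ e) (h2 : a ≠ e) : s(a, c) ≠ s(a, e) := by
  intro h
  rcases Sym2.eq_iff.mp h with ⟨-, h4⟩ | ⟨h4, -⟩
  · exact h1 h4
  · exact h2 h4

/-- common hypotheses bundled: rotation where the kept path is v - u - b with u adjacent v. -/
lemma adjacent_case {m : ℕ} {α : ℝ} (hα0 : 0 ≤ α) (hα1 : α < 1) {G : SimpleGraph (Fin n)}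
    (hconn : G.Connected) (hcard : G.edgeSet.ncard = m) {ρ : ℝ}
    (hmax : ∀ H : SimpleGraph (Fin n), H.Connected → H.edgeSet.ncard = m →
      ∀ ρ' : ℝ, IsMaxEigenvalue (Aalpha H α) ρ' → ρ' ≤ ρ)
    {x : Fin n → ℝ} (hx : ∀ i, 0 < x i) (hxe : Aalpha G α *ᵥ x = ρ • x)
    {u v b : Fin n} (hune : u ≠ b) (hvbne : v ≠ b)
    (huvadj : G.Adj v u) (hvb : G.Adj v b) (hub : ¬ G.Adj u b)
    (hxuv : x v ≤ x u) : False := by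
  have huv : u ≠ v := fun h => G.loopless.irrefl v (h ▸ huvadj)
  apply rot_false hα0 hα1 hconn hcard hmax hx hxe huv hune hvb hub hxuv
  have h1 : (rot G u v b).Adj v u :=
    Or.inl ⟨huvadj, sym2_ne_left hune hvbne⟩
  have h2 : (rot G u v b).Adj u b := (rot_adj_u huv hune hvb hub b).mpr (Or.inr rfl)
  exact (SimpleGraph.Adj.reachable h1).trans (SimpleGraph.Adj.reachable h2)




theorem stmt11 {n m : ℕ} (hm : n - 1 ≤ m) (α : ℝ) (hα0 : 0 ≤ α) (hα1 : α < 1)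
    (G : SimpleGraph (Fin n)) (hconn : G.Connected) (hcard : G.edgeSet.ncard = m)
    (ρ : ℝ) (hρ : IsMaxEigenvalue (Aalpha G α) ρ)
    (hmax : ∀ H : SimpleGraph (Fin n), H.Connected → H.edgeSet.ncard = m →
      ∀ ρ' : ℝ, IsMaxEigenvalue (Aalpha H α) ρ' → ρ' ≤ ρ) :
    IsThreshold G := by
  obtain ⟨x, hx, hxe⟩ := perron hα0 hα1 hconn hρ
  refine ⟨⟨fun f => ?_⟩, ⟨fun f => ?_⟩, ⟨fun f => ?_⟩⟩
  · -- 2K2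
    have hadj : ∀ i j : Fin 4, twoK2.Adj i j ↔ (i ≠ j ∧
        (((i = 0 ∧ j = 1) ∨ (i = 2 ∧ j = 3)) ∨ ((j = 0 ∧ i = 1) ∨ (j = 2 ∧ i = 3)))) := by
      intro i j
      simp only [twoK2]
      exact SimpleGraph.fromRel_adj _ i j
    have hne : ∀ i j : Fin 4, i ≠ j → f i ≠ f j := fun i j h he => h (f.injective he)
    have hpos : ∀ i j : Fin 4, twoK2.Adj i j → G.Adj (f i) (f j) :=
      fun i j h => f.map_adj_iff.mpr h
    have hnegg : ∀ i j : Fin 4, ¬ twoK2.Adj i j → ¬ G.Adj (f i) (f j) :=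
      fun i j h hg => h (f.map_adj_iff.mp hg)
    have eAB : G.Adj (f 0) (f 1) := hpos 0 1 (by rw [hadj]; decide)
    have eCD : G.Adj (f 2) (f 3) := hpos 2 3 (by rw [hadj]; decide)
    have nAC : ¬ G.Adj (f 0) (f 2) := hnegg 0 2 (by rw [hadj]; decide)
    have nAD : ¬ G.Adj (f 0) (f 3) := hnegg 0 3 (by rw [hadj]; decide)
    have nBC : ¬ G.Adj (f 1) (f 2) := hnegg 1 2 (by rw [hadj]; decide)
    have nBD : ¬ G.Adj (f 1) (f 3) := hnegg 1 3 (by rw [hadj]; decide)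
    have d02 : f 0 ≠ f 2 := hne 0 2 (by decide)
    have d03 : f 0 ≠ f 3 := hne 0 3 (by decide)
    have d12 : f 1 ≠ f 2 := hne 1 2 (by decide)
    have d13 : f 1 ≠ f 3 := hne 1 3 (by decide)
    rcases le_total (x (f 0)) (x (f 1)) with h1 | h1
    · rcases le_total (x (f 2)) (x (f 3)) with h2 | h2
      · rcases le_total (x (f 1)) (x (f 3)) with h3 | h3
        · exact twoK2_case hα0 hα1 hconn hcard hmax hx hxe d03.symm d13.symm eAB
            (fun h => nBD h.symm) (fun h => nAD h.symm) (le_trans h1 h3) h3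
        · exact twoK2_case hα0 hα1 hconn hcard hmax hx hxe d12 d13 eCD nBD nBC
            (le_trans h2 h3) h3
      · rcases le_total (x (f 1)) (x (f 2)) with h3 | h3
        · exact twoK2_case hα0 hα1 hconn hcard hmax hx hxe d02.symm d12.symm eAB
            (fun h => nBC h.symm) (fun h => nAC h.symm) (le_trans h1 h3) h3
        · exact twoK2_case hα0 hα1 hconn hcard hmax hx hxe d13 d12 eCD.symm nBC nBD
            (le_trans h2 h3) h3
    · rcases le_total (x (f 2)) (x (f 3)) with h2 | h2
      · rcases le_total (x (f 0)) (x (f 3)) with h3 | h3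
        · exact twoK2_case hα0 hα1 hconn hcard hmax hx hxe d03.symm d13.symm eAB
            (fun h => nBD h.symm) (fun h => nAD h.symm) h3 (le_trans h1 h3)
        · exact twoK2_case hα0 hα1 hconn hcard hmax hx hxe d02 d03 eCD nAD nAC
            (le_trans h2 h3) h3
      · rcases le_total (x (f 0)) (x (f 2)) with h3 | h3
        · exact twoK2_case hα0 hα1 hconn hcard hmax hx hxe d02.symm d12.symm eAB
            (fun h => nBC h.symm) (fun h => nAC h.symm) h3 (le_trans h1 h3)
        · exact twoK2_case hα0 hα1 hconn hcard hmax hx hxe d03 d02 eCD.symm nAC nAD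
            (le_trans h2 h3) h3
  · -- C4
    have hpos : ∀ i j : Fin 4, (SimpleGraph.cycleGraph 4).Adj i j → G.Adj (f i) (f j) :=
      fun i j h => f.map_adj_iff.mpr h
    have hnegg : ∀ i j : Fin 4, ¬ (SimpleGraph.cycleGraph 4).Adj i j → ¬ G.Adj (f i) (f j) :=
      fun i j h hg => h (f.map_adj_iff.mp hg)
    have hne : ∀ i j : Fin 4, i ≠ j → f i ≠ f j := fun i j h he => h (f.injective he)
    have e01 : G.Adj (f 0) (f 1) := hpos 0 1 (by decide)
    have e12 : G.Adj (f 1) (f 2) := hpos 1 2 (by decide)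
    have e03 : G.Adj (f 0) (f 3) := hpos 0 3 (by decide)
    have n02 : ¬ G.Adj (f 0) (f 2) := hnegg 0 2 (by decide)
    have n13 : ¬ G.Adj (f 1) (f 3) := hnegg 1 3 (by decide)
    rcases le_total (x (f 0)) (x (f 1)) with h | h
    · exact adjacent_case hα0 hα1 hconn hcard hmax hx hxe (hne 1 3 (by decide))
        (hne 0 3 (by decide)) e01 e03 n13 h
    · exact adjacent_case hα0 hα1 hconn hcard hmax hx hxe (hne 0 2 (by decide))
        (hne 1 2 (by decide)) e01.symm e12 n02 h
  · -- P4
    have hpos : ∀ i j : Fin 4, (SimpleGraph.pathGraph 4).Adj i j → G.Adj (f i) (f j) :=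
      fun i j h => f.map_adj_iff.mpr h
    have hnegg : ∀ i j : Fin 4, ¬ (SimpleGraph.pathGraph 4).Adj i j → ¬ G.Adj (f i) (f j) :=
      fun i j h hg => h (f.map_adj_iff.mp hg)
    have hne : ∀ i j : Fin 4, i ≠ j → f i ≠ f j := fun i j h he => h (f.injective he)
    have hp : ∀ i j : Fin 4, (SimpleGraph.pathGraph 4).Adj i j ↔
        (i.val + 1 = j.val ∨ j.val + 1 = i.val) := fun i j => SimpleGraph.pathGraph_adj
    have e01 : G.Adj (f 0) (f 1) := hpos 0 1 (by rw [hp]; decide)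
    have e12 : G.Adj (f 1) (f 2) := hpos 1 2 (by rw [hp]; decide)
    have e23 : G.Adj (f 2) (f 3) := hpos 2 3 (by rw [hp]; decide)
    have n02 : ¬ G.Adj (f 0) (f 2) := hnegg 0 2 (by rw [hp]; decide)
    have n13 : ¬ G.Adj (f 1) (f 3) := hnegg 1 3 (by rw [hp]; decide)
    rcases le_total (x (f 1)) (x (f 2)) with h | h
    · exact adjacent_case hα0 hα1 hconn hcard hmax hx hxe (hne 2 0 (by decide))
        (hne 1 0 (by decide)) e12 e01.symm (fun h2 => n02 h2.symm) h
    · exact adjacent_case hα0 hα1 hconn hcard hmax hx hxe (hne 1 3 (by decide))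
        (hne 2 3 (by decide)) e12.symm e23 n13 h
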